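/- arXiv:math/0104161 — 2 statements merged into one kernel-verified Lean document; each statement's English description precedes it below -/
import Mathlib

section
/- In the region R₀ defined by 1/√2 < x ≤ 1 and 1/√(2-δ) < y ≤ √(1-ε) with 0 < δ < 1/2 and 0 < ε < 1/2, one has (1-y²)/y² < 1-δ and 2x²-1 > 0, and hence the discriminant αγ - β² = (y²(1-y²)/4)·(3x² - ((1-y²)/y²)·x² - 1) is strictly positive, where α = (y/2)(3x²-1), γ = (y/2)(1-y²), 2β = -(1-y²)x. -/
theorem stmt_17 (δ ε x y : ℝ) (hδ1 : 0 < δ) (hδ2 : δ < 1/2)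
    (hε1 : 0 < ε) (hε2 : ε < 1/2)
    (hx1 : 1 / Real.sqrt 2 < x) (hx2 : x ≤ 1)
    (hy1 : 1 / Real.sqrt (2 - δ) < y) (hy2 : y ≤ Real.sqrt (1 - ε)) :
    (1 - y^2) / y^2 < 1 - δ ∧ 2*x^2 - 1 > 0 ∧
      (y/2 * (3*x^2 - 1)) * (y/2 * (1 - y^2)) - (-(1 - y^2) * x / 2)^2 > 0 := by
  have h2 : (0:ℝ) < 2 - δ := by linarith
  have hx0 : 0 < x := lt_trans (by positivity) hx1
  have hy0 : 0 < y := lt_trans (by positivity) hy1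
  have hxsq : 1/2 < x^2 := by
    have h := pow_lt_pow_left₀ hx1 (by positivity) (n := 2) two_ne_zero
    rw [div_pow, one_pow, Real.sq_sqrt (by norm_num)] at h
    linarith
  have hysq : 1/(2-δ) < y^2 := by
    have h := pow_lt_pow_left₀ hy1 (by positivity) (n := 2) two_ne_zero
    rw [div_pow, one_pow, Real.sq_sqrt h2.le] at h
    linarith
  have hysq2 : y^2 ≤ 1 - ε := by
    have h := pow_le_pow_left₀ hy0.le hy2 2
    rwa [Real.sq_sqrt (by linarith)] at h
  have key : 1 < (2-δ) * y^2 := by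
    rw [div_lt_iff₀ h2] at hysq; linarith
  refine ⟨?_, by linarith, ?_⟩
  · rw [div_lt_iff₀ (by positivity)]
    nlinarith
  · have h1 : 1 - y^2 < y^2 := by nlinarith
    have h2' : (1 - y^2) * x^2 < y^2 * x^2 :=
      mul_lt_mul_of_pos_right h1 (by positivity)
    have h3 : 0 < y^2 * (2*x^2 - 1) := mul_pos (pow_pos hy0 2) (by linarith)
    have h4 : 0 < 1 - y^2 := by nlinarith
    nlinarith [mul_pos h4 (show 0 < y^2*(3*x^2-1) - (1-y^2)*x^2 by nlinarith)]
end

section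
/- In the region R₀ (1/√2 < x ≤ 1, 1/√(2-δ) < y ≤ √(1-ε), 0 < δ, ε < 1/2), the pointwise estimate (y/2)(3x²-1)w₁² - (1-y²)x·w₁w₂ + (y/2)(1-y²)w₂² ≥ (ε(1-√(1-δ))/(2√(2-δ)))·(w₁² + w₂²) holds for all w₁, w₂ ∈ ℝ. -/
set_option maxHeartbeats 1600000

private lemma cubic_aux (s t y : ℝ) (ht0 : 0 < t) (ht1 : t ≤ 1) (hs0 : 0 < s)
    (hst : s^2 = 1 + t^2) (hsle : s^2 ≤ 2) (hy0 : 0 < y) (hy1l : y ≤ 1) (hys : 1 ≤ y*s) :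
    0 ≤ s*(2*y^2-1) - (1-t)*y*(3-2*y^2) := by
  have hy2s : 1 ≤ y^2*s^2 := by nlinarith [mul_pos hy0 hs0]
  have hbr : 0 ≤ 2*(y^2*s^2) + 2*(y*s) + 2 - 3*s^2 := by linarith
  have hB : 0 ≤ 2*(1-t)*(y^2*s^2 + y*s + 1) + 2*s^3*y + 2*s^2 - 3*(1-t)*s^2 := by
    nlinarith [mul_nonneg (by linarith : (0:ℝ) ≤ 1-t) hbr,
      mul_pos (mul_pos hs0 (mul_pos hs0 hs0)) hy0]
  have key : s^3*(s*(2*y^2-1) - (1-t)*y*(3-2*y^2))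
      = (y*s-1)*(2*(1-t)*(y^2*s^2 + y*s + 1) + 2*s^3*y + 2*s^2 - 3*(1-t)*s^2)
        + t*(1-t)^3 := by
    linear_combination (-2 + 3*t - t^2 - s^2) * hst
  have h1 : 0 ≤ s^3*(s*(2*y^2-1) - (1-t)*y*(3-2*y^2)) := by
    rw [key]
    have h2 := mul_nonneg (by linarith : (0:ℝ) ≤ y*s - 1) hB
    have h3 := mul_nonneg ht0.le (pow_nonneg (by linarith : (0:ℝ) ≤ 1-t) 3)
    linarith
  exact (mul_nonneg_iff_of_pos_left (pow_pos hs0 3)).mp h1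

private lemma disc_aux (s t y x ε : ℝ) (ht0 : 0 < t) (ht1 : t ≤ 1) (h2t : 1 ≤ 2*t^2)
    (hs0 : 0 < s) (hst : s^2 = 1 + t^2) (hsle : s^2 ≤ 2)
    (hy0 : 0 < y) (hy1l : y ≤ 1) (hys : 1 ≤ y*s)
    (hε0 : 0 ≤ ε) (hεy : ε ≤ 1-y^2) (hx1 : 1 ≤ 2*x^2) (hx2 : x ≤ 1) :
    0 ≤ s*((1-y^2)*(x^2*(4*y^2-1) - y^2)) - ε*(1-t)*y*(3*x^2-y^2) := by
  have hH := cubic_aux s t y ht0 ht1 hs0 hst hsle hy0 hy1l hys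
  have hyy : 0 ≤ 1 - y^2 := by nlinarith [mul_nonneg (by linarith : (0:ℝ) ≤ 1-y) (by linarith : (0:ℝ) ≤ 1+y)]
  have h32 : 0 ≤ 3 - 2*y^2 := by linarith
  have hmid : 0 ≤ s*(1-y^2)*(2*y^2-1) - ε*(1-t)*y*(3-2*y^2) := by
    have h1 := mul_nonneg hyy hH
    have h2 := mul_nonneg (by linarith : 0 ≤ (1-y^2) - ε)
      (mul_nonneg (mul_nonneg (by linarith : (0:ℝ) ≤ 1-t) hy0.le) h32)
    nlinarith [h1, h2]
  have hy2s : 1 ≤ y^2*s^2 := by nlinarith [mul_pos hy0 hs0]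
  have hs32 : s ≤ 3/2 := by nlinarith
  have ht59 : 5/9 ≤ t := by nlinarith
  have hys32 : y*s ≤ 3/2 := by nlinarith [mul_nonneg (by linarith : (0:ℝ) ≤ 1-y) hs0.le]
  have h9 : (1-t)*(y*s) ≤ 2/3 := by
    nlinarith [mul_nonneg (show 0 ≤ 4/9 - (1-t) by linarith) (mul_pos hy0 hs0).le]
  have hcoef2 : 0 ≤ s*(4*y^2-1) - 3*(1-t)*y := by
    have hsmul : 0 ≤ s*(s*(4*y^2-1) - 3*(1-t)*y) := by nlinarith [h9, hy2s, hsle]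
    exact (mul_nonneg_iff_of_pos_left hs0).mp hsmul
  have hy12 : 1 ≤ 2*y^2 := by
    nlinarith [mul_nonneg (show (0:ℝ) ≤ 2 - s^2 by linarith) (sq_nonneg y)]
  have hcoef2' : 0 ≤ s*(4*y^2-1) := mul_nonneg hs0.le (by linarith)
  have hcoef : 0 ≤ s*(1-y^2)*(4*y^2-1) - 3*ε*(1-t)*y := by
    nlinarith [mul_nonneg (by linarith : 0 ≤ (1-y^2) - ε) hcoef2', mul_nonneg hε0 hcoef2]
  nlinarith [mul_nonneg (show (0:ℝ) ≤ 2*x^2 - 1 by linarith) hcoef, hmid]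

theorem stmt_18 (δ ε x y w₁ w₂ : ℝ) (hδ1 : 0 < δ) (hδ2 : δ < 1/2)
    (hε1 : 0 < ε) (hε2 : ε < 1/2)
    (hx1 : 1 / Real.sqrt 2 < x) (hx2 : x ≤ 1)
    (hy1 : 1 / Real.sqrt (2 - δ) < y) (hy2 : y ≤ Real.sqrt (1 - ε)) :
    y/2 * (3*x^2 - 1) * w₁^2 - (1 - y^2) * x * w₁ * w₂ + y/2 * (1 - y^2) * w₂^2
      ≥ (ε * (1 - Real.sqrt (1 - δ)) / (2 * Real.sqrt (2 - δ))) * (w₁^2 + w₂^2) := by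
  set s := Real.sqrt (2 - δ) with hs
  set t := Real.sqrt (1 - δ) with ht
  have hs0 : (0:ℝ) < s := Real.sqrt_pos.mpr (by linarith)
  have hs2 : s^2 = 2 - δ := Real.sq_sqrt (by linarith)
  have ht0 : (0:ℝ) < t := Real.sqrt_pos.mpr (by linarith)
  have ht2 : t^2 = 1 - δ := Real.sq_sqrt (by linarith)
  have hst : s^2 = 1 + t^2 := by linarith
  have ht1 : t < 1 := by nlinarith
  have hs1 : 1 < s := by nlinarith
  have hsle : s^2 ≤ 2 := by nlinarith
  have h2t : 1 < 2*t^2 := by nlinarith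
  have hy0 : 0 < y := lt_trans (by positivity) hy1
  have hys : 1 < y * s := by
    rw [div_lt_iff₀ hs0] at hy1; linarith
  have hyu : y^2 ≤ 1 - ε := by
    nlinarith [Real.sq_sqrt (show (0:ℝ) ≤ 1 - ε by linarith), Real.sqrt_nonneg (1-ε), hy2]
  have hy1l : y ≤ 1 := by nlinarith
  have hεy : ε ≤ 1 - y^2 := by linarith
  have h2 : (0:ℝ) < Real.sqrt 2 := Real.sqrt_pos.mpr (by norm_num)
  have h22 : (Real.sqrt 2)^2 = 2 := Real.sq_sqrt (by norm_num)
  have hx0 : 0 < x := lt_trans (by positivity) hx1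
  have hx2' : 1 < 2*x^2 := by
    rw [div_lt_iff₀ h2] at hx1; nlinarith
  have h1t : 0 ≤ 1 - t := by linarith
  have hK := disc_aux s t y x ε ht0 ht1.le h2t.le hs0 hst hsle hy0 hy1l hys.le
    hε1.le hεy hx2'.le hx2
  clear hy1 hy2 hx1 hs ht hyu
  -- abbreviate μ
  set m := ε*(1-t)/(2*s) with hm
  have hm0 : 0 ≤ m := div_nonneg (mul_nonneg hε1.le h1t) (by positivity)
  have hmeq : 2*s*m = ε*(1-t) := by
    rw [hm]; field_simp
  -- a - m > 0
  have hA : m < y/2*(3*x^2-1) := by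
    rw [hm, div_lt_iff₀ (by positivity : (0:ℝ) < 2*s)]
    nlinarith [mul_nonneg (show (0:ℝ) ≤ y*s - 1 by linarith) (show (0:ℝ) ≤ 3*x^2-1 by linarith),
      mul_pos hε1 ht0]
  -- discriminant of the shifted quadratic form is nonnegative
  have hDs : s*(4*(y/2*(3*x^2-1) - m)*(y/2*(1-y^2) - m) - ((1-y^2)*x)^2)
      = (s*((1-y^2)*(x^2*(4*y^2-1) - y^2)) - ε*(1-t)*y*(3*x^2-y^2)) + 2*m*(ε*(1-t)) := by
    linear_combination (2*m - y*(3*x^2-y^2)) * hmeq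
  have hD : 0 ≤ 4*(y/2*(3*x^2-1) - m)*(y/2*(1-y^2) - m) - ((1-y^2)*x)^2 := by
    have h1 : 0 ≤ s*(4*(y/2*(3*x^2-1) - m)*(y/2*(1-y^2) - m) - ((1-y^2)*x)^2) := by
      rw [hDs]
      have := mul_nonneg hm0 (mul_nonneg hε1.le h1t)
      linarith
    exact (mul_nonneg_iff_of_pos_left hs0).mp h1
  -- assemble: positive definiteness of the quadratic form
  have hApos : 0 < y/2*(3*x^2-1) - m := by linarith
  have final : 4*(y/2*(3*x^2-1) - m) *
      ((y/2 * (3*x^2 - 1) * w₁^2 - (1 - y^2) * x * w₁ * w₂ + y/2 * (1 - y^2) * w₂^2)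
        - m * (w₁^2 + w₂^2))
      = (2*(y/2*(3*x^2-1) - m)*w₁ - ((1-y^2)*x)*w₂)^2
        + (4*(y/2*(3*x^2-1) - m)*(y/2*(1-y^2) - m) - ((1-y^2)*x)^2)*w₂^2 := by
    ring
  nlinarith [final, hApos, sq_nonneg (2*(y/2*(3*x^2-1) - m)*w₁ - ((1-y^2)*x)*w₂),
    mul_nonneg hD (sq_nonneg w₂)]
end
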